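/- In the mixed-measure setting, let f̃_c : C → ℝ be measurable and λ-square-integrable with ∫_C f̃_c dλ = 0, and let f̃_d : D• → ℝ satisfy Σ_{d=1}^{D+1} w_d f̃_d(t_d) = 0. Define ι̃_c(f̃_c) : I → ℝ to equal f̃_c on C and 0 on D, and ι̃_d(f̃_d) : I → ℝ to equal f̃_d(t_{D+1}) on C and f̃_d(t_d) at each t_d ∈ D. Then ι̃_c(f̃_c) and ι̃_d(f̃_d) both have μ-integral zero, and they are orthogonal in L²(μ): ∫_I ι̃_c(f̃_c) · ι̃_d(f̃_d) dμ = 0. -/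

import Mathlib

open MeasureTheory
open scoped Classical

/-- The mixed reference measure `μ = Σ_d w_d δ_{t_d} + λ`, where `λ` is Lebesgue measure
restricted to `I`. -/
noncomputable def mixedMeasure (I : Set ℝ) (n : ℕ) (t : Fin n → ℝ) (w : Fin n → ℝ) :
    Measure ℝ :=
  (∑ d, ENNReal.ofReal (w d) • Measure.dirac (t d)) + volume.restrict I

private lemma integrable_dirac_any (f : ℝ → ℝ) (a : ℝ) :
    Integrable f (Measure.dirac a) := by
  refine (integrable_const (f a)).congr ?_
  rw [MeasureTheory.ae_dirac_eq]
  exact Filter.eventually_pure.2 rfl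

theorem mixed_embeddings_orthogonal
    (I : Set ℝ) (hImeas : MeasurableSet I) (hIconn : I.OrdConnected)
    (hI0 : 0 < volume I) (hIfin : volume I < ⊤)
    (n : ℕ) (t : Fin n → ℝ) (htinj : Function.Injective t) (htI : ∀ d, t d ∈ I)
    (w : Fin n → ℝ) (hw : ∀ d, 0 < w d)
    (s : ℝ) (hs : s ∉ Set.range t)
    (fc : ℝ → ℝ) (hfc : Measurable fc)
    (hfcsq : IntegrableOn (fun x => (fc x) ^ 2) (I \ Set.range t) (volume.restrict I))
    (hfc0 : ∫ x in I \ Set.range t, fc x ∂(volume.restrict I) = 0)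
    (fd : ℝ → ℝ)
    (hfd0 : ∑ d, w d * fd (t d) + (volume I).toReal * fd s = 0) :
    (∫ x, (if x ∈ Set.range t then 0 else fc x) ∂(mixedMeasure I n t w) = 0) ∧
      (∫ x, (if x ∈ Set.range t then fd x else fd s) ∂(mixedMeasure I n t w) = 0) ∧
      (∫ x in I, (if x ∈ Set.range t then 0 else fc x) *
          (if x ∈ Set.range t then fd x else fd s) ∂(mixedMeasure I n t w) = 0) := by
  set ν : Measure ℝ := ∑ d, ENNReal.ofReal (w d) • Measure.dirac (t d) with hν
  set T : Set ℝ := Set.range t with hT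
  have hTmeas : MeasurableSet T := (Set.finite_range t).measurableSet
  have hT0 : volume T = 0 := (Set.finite_range t).measure_zero volume
  -- a.e. results on the Lebesgue part
  have hT0' : volume.restrict I T = 0 := by
    rw [Measure.restrict_apply hTmeas]
    exact measure_mono_null Set.inter_subset_left hT0
  have hae_not : ∀ᵐ x ∂(volume.restrict I), x ∉ T := by
    rw [ae_iff]
    simpa using hT0'
  -- restricting further to `I \ T` changes nothing
  have hres : (volume.restrict I).restrict (I \ T) = volume.restrict I := by
    rw [Measure.restrict_restrict (hImeas.diff hTmeas),
      Set.inter_eq_left.2 Set.diff_subset]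
    exact Measure.restrict_congr_set (MeasureTheory.diff_ae_eq_self.2
      (measure_mono_null Set.inter_subset_right hT0))
  have hfcsq' : Integrable (fun x => (fc x) ^ 2) (volume.restrict I) := by
    have := hfcsq
    rwa [IntegrableOn, hres] at this
  have hfc0' : ∫ x, fc x ∂(volume.restrict I) = 0 := by
    rwa [show (∫ x in I \ T, fc x ∂(volume.restrict I))
        = ∫ x, fc x ∂((volume.restrict I).restrict (I \ T)) from rfl, hres] at hfc0
  haveI : IsFiniteMeasure (volume.restrict I) :=
    ⟨by rwa [Measure.restrict_apply_univ]⟩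
  have hfcint : Integrable fc (volume.restrict I) := by
    refine (hfcsq'.add (integrable_const 1)).mono' hfc.aestronglyMeasurable ?_
    filter_upwards with x
    simp only [Pi.add_apply, Real.norm_eq_abs]
    nlinarith [sq_nonneg (|fc x| - 1), sq_abs (fc x)]
  -- integrals against the atomic part
  have hνint : ∀ f : ℝ → ℝ, Integrable f ν := by
    intro f
    exact integrable_finset_sum_measure.2 fun d _ =>
      (integrable_dirac_any f (t d)).smul_measure ENNReal.ofReal_ne_top
  have hνeq : ∀ f : ℝ → ℝ, ∫ x, f x ∂ν = ∑ d, w d * f (t d) := by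
    intro f
    rw [hν, integral_finset_sum_measure fun d _ =>
      (integrable_dirac_any f (t d)).smul_measure ENNReal.ofReal_ne_top]
    refine Finset.sum_congr rfl fun d _ => ?_
    rw [integral_smul_measure, integral_dirac, smul_eq_mul,
      ENNReal.toReal_ofReal (hw d).le]
  set g1 : ℝ → ℝ := fun x => if x ∈ Set.range t then 0 else fc x with hg1
  set g2 : ℝ → ℝ := fun x => if x ∈ Set.range t then fd x else fd s with hg2
  have hg1ae : g1 =ᵐ[volume.restrict I] fc := by
    filter_upwards [hae_not] with x hx
    exact if_neg hx
  have hg2ae : g2 =ᵐ[volume.restrict I] fun _ => fd s := by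
    filter_upwards [hae_not] with x hx
    exact if_neg hx
  have hg1int : Integrable g1 (volume.restrict I) := hfcint.congr hg1ae.symm
  have hg2int : Integrable g2 (volume.restrict I) :=
    (integrable_const (fd s)).congr hg2ae.symm
  have hμ : mixedMeasure I n t w = ν + volume.restrict I := rfl
  have hg1T : ∀ d : Fin n, g1 (t d) = 0 := fun d => by simp [hg1]
  -- first integral
  have h1 : ∫ x, g1 x ∂(mixedMeasure I n t w) = 0 := by
    rw [hμ, integral_add_measure (hνint g1) hg1int, hνeq g1,
      integral_congr_ae hg1ae, hfc0',
      Finset.sum_eq_zero fun d _ => by rw [hg1T d, mul_zero]]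
    ring
  refine ⟨h1, ?_, ?_⟩
  -- second integral
  · rw [hμ, integral_add_measure (hνint g2) hg2int, hνeq g2,
      integral_congr_ae hg2ae, integral_const]
    have hsum : ∑ d, w d * g2 (t d) = ∑ d, w d * fd (t d) :=
      Finset.sum_congr rfl fun d _ => by simp [hg2]
    rw [hsum, measureReal_def, Measure.restrict_apply_univ, smul_eq_mul]
    exact hfd0
  -- orthogonality
  · have hprod : (fun x => g1 x * g2 x) = fun x => fd s * g1 x := by
      funext x
      simp only [hg1, hg2]
      split_ifs with h <;> ring
    have hνres : ν.restrict I = ν := by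
      rw [hν, ← Measure.restrictₗ_apply, map_sum]
      refine Finset.sum_congr rfl fun d _ => ?_
      rw [LinearMap.map_smul, Measure.restrictₗ_apply,
        restrict_dirac' hImeas, if_pos (htI d)]
    have hμres : (mixedMeasure I n t w).restrict I = mixedMeasure I n t w := by
      rw [hμ, Measure.restrict_add, hνres,
        Measure.restrict_restrict hImeas, Set.inter_self]
    calc ∫ x in I, g1 x * g2 x ∂(mixedMeasure I n t w)
        = ∫ x in I, fd s * g1 x ∂(mixedMeasure I n t w) := by rw [hprod]
      _ = fd s * ∫ x in I, g1 x ∂(mixedMeasure I n t w) := integral_const_mul _ _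
      _ = 0 := by
          rw [show (∫ x in I, g1 x ∂(mixedMeasure I n t w))
              = ∫ x, g1 x ∂((mixedMeasure I n t w).restrict I) from rfl, hμres, h1,
            mul_zero]
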